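/- arXiv:2502.09562 — 7 statements merged into one kernel-verified Lean document; each statement's English description precedes it below -/
import Mathlib

section
/- Let R be a commutative ring, m a maximal ideal of R, κ a field, ι : κ → R an injective ring homomorphism, and j : R/m ≅ κ a ring isomorphism such that ι ∘ j is a section of the canonical projection π : R → R/m (i.e., π(ι(j([z]))) = [z] for all z ∈ R). Regard m as a non-unital commutative κ-algebra via the multiplication of R and the scalar action u • x = ι(u)·x. Then the map φ : Unitization κ m → R defined by φ(u,x) = ι(u) + x is a ring isomorphism. -/
/-- If `R` is a commutative ring, `m` a maximal ideal, `κ` a field,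
`ι : κ →+* R` an injective ring homomorphism and `j : R ⧸ m ≃+* κ` a ring isomorphism
such that `ι ∘ j` is a section of the canonical projection, then, regarding `m` as a
non-unital commutative `κ`-algebra (via the multiplication of `R` and the scalar action
through `ι`), the map `φ : Unitization κ m → R`, `(u, x) ↦ ι u + x`, is a ring
isomorphism. -/
theorem stmt_1 {R κ : Type*} [CommRing R] [Field κ] (m : Ideal R) (hm : m.IsMaximal)
    (ι : κ →+* R) (hι : Function.Injective ι) (j : (R ⧸ m) ≃+* κ)
    (hsec : ∀ z : R, Ideal.Quotient.mk m (ι (j (Ideal.Quotient.mk m z))) =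
      Ideal.Quotient.mk m z) :
    letI : Algebra κ R := ι.toAlgebra
    let A : NonUnitalSubalgebra κ R :=
      (Submodule.restrictScalars κ m).toNonUnitalSubalgebra
        (fun x _ hx hy => Ideal.mul_mem_right _ m hx)
    ∃ e : Unitization κ A ≃+* R,
      ∀ (u : κ) (x : A), e (Unitization.inl u + Unitization.inr x) = ι u + (x : R) := by
  letI : Algebra κ R := ι.toAlgebra
  intro A
  let f : Unitization κ A →ₐ[κ] R := Unitization.lift (NonUnitalSubalgebraClass.subtype A)
  have hf : ∀ (u : κ) (x : A), f (Unitization.inl u + Unitization.inr x) = ι u + (x : R) := by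
    intro u x
    simp [f]
    rfl
  have hπι : ∀ u : κ, Ideal.Quotient.mk m (ι u) = j.symm u := by
    intro u
    obtain ⟨z, hz⟩ := (Ideal.Quotient.mk m).surjective (j.symm u)
    have h2 : j (Ideal.Quotient.mk m z) = u := by rw [hz]; simp
    have h3 := hsec z
    rw [h2, hz] at h3
    exact h3
  have hbij : Function.Bijective f := by
    constructor
    · rw [injective_iff_map_eq_zero]
      intro a ha
      induction a with
      | inl_add_inr u x =>
        rw [hf] at ha
        have hx : (x : R) ∈ m := x.2
        have : Ideal.Quotient.mk m (ι u + (x : R)) = 0 := by rw [ha]; simp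
        rw [map_add, Ideal.Quotient.eq_zero_iff_mem.mpr hx, add_zero, hπι] at this
        have hu : u = 0 := by
          have := j.symm.injective (by simpa using this)
          simpa using this
        subst hu
        have hx0 : (x : R) = 0 := by simpa using ha
        have : x = 0 := Subtype.ext hx0
        rw [this]
        simp
    · intro r
      set u := j (Ideal.Quotient.mk m r) with hu
      have hmem : r - ι u ∈ m := by
        rw [← Ideal.Quotient.eq_zero_iff_mem, map_sub, hu, hsec, sub_self]
      refine ⟨Unitization.inl u + Unitization.inr ⟨r - ι u, hmem⟩, ?_⟩
      rw [hf]
      simp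
  exact ⟨RingEquiv.ofBijective (f : Unitization κ A →+* R) hbij, fun u x => hf u x⟩
end

section
/- Let R be a commutative local ring with maximal ideal m and let K be a subring of R that is a field. Suppose that every unit of R can be written as x + u with x ∈ m and u ∈ K (class (A) condition), that every unit of R belongs to K, and that every non-unit of R can be written as x + u with x ∈ m and u ∈ K (class (B) condition). Then m = {0} and R is a field. -/
/-- Let `R` be a commutative local ring with maximal ideal `m` and `K`
a subring of `R` that is a field. If every unit of `R` can be written as `x + u` with
`x ∈ m`, `u ∈ K` (class (A) condition), every unit of `R` belongs to `K`, and every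
non-unit of `R` can be written as `x + u` with `x ∈ m`, `u ∈ K` (class (B) condition),
then `m = {0}` and `R` is a field. -/
theorem stmt_7 {R : Type*} [CommRing R] [IsLocalRing R] (K : Subring R) (hK : IsField K)
    (hA : ∀ a : R, IsUnit a → ∃ x ∈ IsLocalRing.maximalIdeal R, ∃ u ∈ K, a = x + u)
    (hUK : ∀ a : R, IsUnit a → a ∈ K)
    (hB : ∀ a : R, ¬ IsUnit a → ∃ x ∈ IsLocalRing.maximalIdeal R, ∃ u ∈ K, a = x + u) :
    IsLocalRing.maximalIdeal R = ⊥ ∧ IsField R := by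
  have key : ∀ a ∈ IsLocalRing.maximalIdeal R, a = 0 := by
    intro a ha
    -- 1 + a is a unit
    have h1 : IsUnit (1 + a) := by
      by_contra h
      have hm : (1 + a) ∈ IsLocalRing.maximalIdeal R :=
        (IsLocalRing.mem_maximalIdeal _).mpr h
      have : (1 : R) ∈ IsLocalRing.maximalIdeal R := by
        have := (IsLocalRing.maximalIdeal R).sub_mem hm ha
        simpa using this
      exact (IsLocalRing.maximalIdeal R).ne_top_iff_one.mp
        (Ideal.IsMaximal.ne_top inferInstance) this
    have haK : a ∈ K := by
      have h1K : (1 + a) ∈ K := hUK _ h1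
      have : (1 + a) - 1 ∈ K := K.sub_mem h1K K.one_mem
      simpa using this
    by_contra hne
    have hzero : (⟨a, haK⟩ : K) ≠ 0 := by
      intro h
      exact hne (congrArg Subtype.val h)
    obtain ⟨b, hb⟩ := hK.mul_inv_cancel hzero
    have : a * (b : R) = 1 := congrArg Subtype.val hb
    have : IsUnit a := isUnit_iff_exists_inv.mpr ⟨_, this⟩
    exact ((IsLocalRing.mem_maximalIdeal _).mp ha) this
  have hm : IsLocalRing.maximalIdeal R = ⊥ := by
    ext x
    simp only [Ideal.mem_bot]
    exact ⟨fun h => key x h, fun h => h ▸ (IsLocalRing.maximalIdeal R).zero_mem⟩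
  refine ⟨hm, ⟨⟨0, 1, zero_ne_one⟩, mul_comm, ?_⟩⟩
  intro a ha
  have : IsUnit a := by
    by_contra h
    exact ha (key a ((IsLocalRing.mem_maximalIdeal _).mpr h))
  obtain ⟨u, rfl⟩ := this
  exact ⟨(u⁻¹ : Rˣ), by simp⟩
end

section
/- Let R be a commutative ring that satisfies property (⋆), exhibited by a maximal ideal m of R and a subring K of R that is a field (i.e., the canonical projection R → R/m admits a ring homomorphism section with image K). Let S be a non-unital commutative R-algebra. Then the unitization Unitization R S satisfies property (⋆); more precisely, the set {(r,s) ∈ Unitization R S : r ∈ m} is a maximal ideal of Unitization R S which, together with the subfield {(u,0) : u ∈ K}, exhibits property (⋆) for Unitization R S. -/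
/-- Let `R` be a commutative ring satisfying property (⋆), exhibited by
a maximal ideal `m` and a subring `K` of `R` that is a field (the canonical projection
`R → R ⧸ m` has a ring homomorphism section with image `K`). Let `S` be a non-unital
commutative `R`-algebra. Then `{(r, s) : r ∈ m}` is a maximal ideal of
`Unitization R S` which, together with the subfield `{(u, 0) : u ∈ K}`, exhibits
property (⋆) for `Unitization R S`. -/
theorem stmt_8 {R : Type*} [CommRing R] (m : Ideal R) (hm : m.IsMaximal)
    (K : Subring R) (hK : IsField K)
    (hstar : ∃ s : R ⧸ m →+* R,
      (Ideal.Quotient.mk m).comp s = RingHom.id (R ⧸ m) ∧ Set.range s = (K : Set R))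
    (S : Type*) [NonUnitalCommRing S] [Module R S] [SMulCommClass R S S]
    [IsScalarTower R S S] :
    let M : Ideal (Unitization R S) := Ideal.comap (Unitization.fstHom R S).toRingHom m
    (∀ z : Unitization R S, z ∈ M ↔ z.fst ∈ m) ∧
    M.IsMaximal ∧
    ∃ s : Unitization R S ⧸ M →+* Unitization R S,
      (Ideal.Quotient.mk M).comp s = RingHom.id (Unitization R S ⧸ M) ∧
      Set.range s = Unitization.inlRingHom R S '' (K : Set R) := by
  intro M
  have hmem : ∀ z : Unitization R S, z ∈ M ↔ z.fst ∈ m := fun z => Iff.rfl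
  obtain ⟨s0, hs0, hrange⟩ := hstar
  have hsurj : Function.Surjective (Unitization.fstHom R S).toRingHom :=
    fun r => ⟨Unitization.inl r, rfl⟩
  refine ⟨hmem, Ideal.comap_isMaximal_of_surjective _ hsurj, ?_⟩
  set φ : Unitization R S ⧸ M →+* R ⧸ m :=
    Ideal.Quotient.lift M ((Ideal.Quotient.mk m).comp (Unitization.fstHom R S).toRingHom)
      (fun z hz => by
        simpa using Ideal.Quotient.eq_zero_iff_mem.mpr ((hmem z).mp hz)) with hφ
  have hφmk : ∀ z : Unitization R S, φ (Ideal.Quotient.mk M z) = Ideal.Quotient.mk m z.fst :=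
    fun z => rfl
  refine ⟨((Unitization.inlRingHom R S).comp s0).comp φ, ?_, ?_⟩
  · refine RingHom.ext fun x => ?_
    obtain ⟨z, rfl⟩ := Ideal.Quotient.mk_surjective (I := M) x
    simp only [RingHom.comp_apply, RingHom.id_apply, hφmk]
    refine Ideal.Quotient.eq.mpr ((hmem _).mpr ?_)
    have : (Unitization.inlRingHom R S (s0 (Ideal.Quotient.mk m z.fst)) - z).fst
        = s0 (Ideal.Quotient.mk m z.fst) - z.fst := by
      simp [Unitization.inlRingHom, sub_eq_add_neg]
    rw [this, ← Ideal.Quotient.eq_zero_iff_mem, map_sub]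
    have := congrArg (fun f => f (Ideal.Quotient.mk m z.fst)) hs0
    simp only [RingHom.comp_apply, RingHom.id_apply] at this
    rw [this, sub_self]
  · have hφsurj : Function.Surjective φ := by
      intro y
      obtain ⟨r, rfl⟩ := Ideal.Quotient.mk_surjective y
      exact ⟨Ideal.Quotient.mk M (Unitization.inl r), by simp [hφmk]⟩
    have : Set.range (((Unitization.inlRingHom R S).comp s0).comp φ)
        = Unitization.inlRingHom R S '' (Set.range s0) := by
      rw [RingHom.coe_comp, Set.range_comp, hφsurj.range_eq, Set.image_univ,
        RingHom.coe_comp, Set.range_comp]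
    rw [this, hrange]
end

section
/- Let R be a commutative ring, m a maximal ideal of R, and K a subring of R that is a field, such that every element a ∈ R can be written as a = x + u with x ∈ m and u ∈ K. Assume further that every element of R ∖ m is a non-zero-divisor of R. Then the localization R_m of R at m satisfies property (⋆): the extended ideal m·R_m is its unique maximal ideal, and every element of R_m can be written as y + f(u) with y ∈ m·R_m and u ∈ K, where f : R → R_m is the localization map; consequently R_m/(m·R_m) is isomorphic to K. -/
/-- Let `R` be a commutative ring, `m` a maximal ideal of `R`, `K` a
subring of `R` that is a field, such that every `a ∈ R` is `x + u` with `x ∈ m`,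
`u ∈ K`, and such that every element of `R ∖ m` is a non-zero-divisor. Then the
localization `R_m` satisfies property (⋆): the extended ideal `m·R_m` is its unique
maximal ideal, every element of `R_m` is `y + f u` with `y ∈ m·R_m` and `u ∈ K`
(`f : R → R_m` the localization map), the canonical projection modulo `m·R_m` admits a
ring homomorphism section, and `R_m ⧸ m·R_m` is isomorphic to `K`. -/
theorem stmt_11 {R : Type*} [CommRing R] (m : Ideal R) [m.IsMaximal]
    (K : Subring R) (hK : IsField K)
    (hdec : ∀ a : R, ∃ x ∈ m, ∃ u ∈ K, a = x + u)
    (hreg : ∀ a : R, a ∉ m → a ∈ nonZeroDivisors R) :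
    let f : R →+* Localization.AtPrime m := algebraMap R (Localization.AtPrime m)
    let M : Ideal (Localization.AtPrime m) := Ideal.map f m
    M = IsLocalRing.maximalIdeal (Localization.AtPrime m) ∧
    (∀ z : Localization.AtPrime m, ∃ y ∈ M, ∃ u ∈ K, z = y + f u) ∧
    (∃ s : Localization.AtPrime m ⧸ M →+* Localization.AtPrime m,
      (Ideal.Quotient.mk M).comp s = RingHom.id (Localization.AtPrime m ⧸ M)) ∧
    Nonempty ((Localization.AtPrime m ⧸ M) ≃+* K) := by
  intro f M
  have hMmax : M = IsLocalRing.maximalIdeal (Localization.AtPrime m) :=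
    Localization.AtPrime.map_eq_maximalIdeal
  set g : R →+* Localization.AtPrime m ⧸ M := (Ideal.Quotient.mk M).comp f with hg
  -- nonzero elements of K have inverses in K
  have hinv : ∀ u : R, u ∈ K → u ≠ 0 → ∃ v ∈ K, u * v = 1 := by
    intro u huK hu
    obtain ⟨v, hv⟩ := hK.mul_inv_cancel (a := ⟨u, huK⟩)
      (by simpa [Subtype.ext_iff] using hu)
    exact ⟨v.1, v.2, congrArg Subtype.val hv⟩
  have hKm : ∀ u : R, u ∈ K → u ∈ m → u = 0 := by
    intro u huK hum
    by_contra h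
    obtain ⟨v, hvK, hv⟩ := hinv u huK h
    exact m.ne_top_iff_one.mp (Ideal.IsMaximal.ne_top ‹_›)
      (hv ▸ m.mul_mem_right v hum)
  have hg0 : ∀ x ∈ m, g x = 0 := by
    intro x hx
    have hfx : f x ∈ M := Ideal.mem_map_of_mem f hx
    show Ideal.Quotient.mk M (f x) = 0
    exact (Ideal.Quotient.eq_zero_iff_mem).mpr hfx
  -- key surjectivity in quotient
  have hsurj : ∀ z : Localization.AtPrime m ⧸ M, ∃ u ∈ K, z = g u := by
    intro z
    obtain ⟨z', rfl⟩ := Ideal.Quotient.mk_surjective z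
    obtain ⟨⟨a, b⟩, hab⟩ := IsLocalization.mk'_surjective m.primeCompl z'
    have hspec : z' * f b = f a := by
      rw [← hab]; exact IsLocalization.mk'_spec _ a b
    obtain ⟨xa, hxa, ua, huaK, ha⟩ := hdec a
    obtain ⟨xb, hxb, ub, hubK, hb⟩ := hdec b
    have hubne : ub ≠ 0 := by
      rintro rfl
      exact b.2 (by rw [show ((b : R)) = xb + 0 from hb, add_zero]; exact hxb)
    obtain ⟨v, hvK, hv⟩ := hinv ub hubK hubne
    refine ⟨ua * v, K.mul_mem huaK hvK, ?_⟩
    have h1 : Ideal.Quotient.mk M z' * g b = g a := by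
      have := congrArg (Ideal.Quotient.mk M) hspec
      rw [map_mul] at this
      exact this
    have hga : g a = g ua := by
      rw [ha, map_add, hg0 xa hxa, zero_add]
    have hgb : g (b : R) = g ub := by
      rw [hb, map_add, hg0 xb hxb, zero_add]
    have huv : g ub * g v = 1 := by rw [← map_mul, hv, map_one]
    calc Ideal.Quotient.mk M z'
        = Ideal.Quotient.mk M z' * (g ub * g v) := by rw [huv, mul_one]
      _ = (Ideal.Quotient.mk M z' * g b) * g v := by rw [hgb]; ring
      _ = g ua * g v := by rw [h1, hga]
      _ = g (ua * v) := by rw [map_mul]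
  refine ⟨hMmax, ?_, ?_⟩
  · intro z
    obtain ⟨u, huK, hu⟩ := hsurj (Ideal.Quotient.mk M z)
    refine ⟨z - f u, ?_, u, huK, by ring⟩
    rw [← Ideal.Quotient.eq_zero_iff_mem, map_sub]
    have h2 : Ideal.Quotient.mk M (f u) = g u := rfl
    rw [h2, ← hu, sub_self]
  · -- equiv K ≃ Q
    have hinj : Function.Injective (g.comp K.subtype) := by
      rw [injective_iff_map_eq_zero]
      intro u hu
      have : f u.1 ∈ M := by
        rw [← Ideal.Quotient.eq_zero_iff_mem]
        exact hu
      have hm : (u : R) ∈ m := by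
        have := hMmax ▸ this
        have h2 := Localization.AtPrime.comap_maximalIdeal (I := m)
        rw [← h2]
        exact this
      exact Subtype.ext (hKm u.1 u.2 hm)
    have hsurj' : Function.Surjective (g.comp K.subtype) := by
      intro z
      obtain ⟨u, huK, hu⟩ := hsurj z
      exact ⟨⟨u, huK⟩, hu.symm⟩
    let e : K ≃+* (Localization.AtPrime m ⧸ M) :=
      RingEquiv.ofBijective (g.comp K.subtype) ⟨hinj, hsurj'⟩
    refine ⟨⟨(f.comp K.subtype).comp e.symm.toRingHom, ?_⟩, ⟨e.symm⟩⟩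
    ext q
    have : (Ideal.Quotient.mk M) (f ((e.symm q) : R)) = e (e.symm q) := rfl
    simp [RingHom.comp_apply, this]
end

section
/- Let R = ℚ[x]_{⟨x²+1⟩} be the localization of the polynomial ring ℚ[x] at its maximal ideal ⟨x²+1⟩. Then R does not satisfy property (⋆): there exist no maximal ideal m of R and ring homomorphism s : R/m → R such that the canonical projection π : R → R/m satisfies π ∘ s = id. -/
/-- A transcendental real number over ℚ. -/
theorem aux_transcendental_Q : Transcendental ℚ (liouvilleNumber 3) := fun h =>
  transcendental_liouvilleNumber (by norm_num)
    ((IsFractionRing.isAlgebraic_iff ℤ ℚ ℝ).mpr h)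

/-- Let `R = ℚ[x]_{⟨x²+1⟩}` be the localization of `ℚ[x]` at its
maximal ideal `⟨x² + 1⟩`. Then `R` does not satisfy property (⋆): there is no maximal
ideal `m` of `R` together with a ring homomorphism `s : R ⧸ m → R` that is a section of
the canonical projection. -/
theorem stmt_15 (I : Ideal (Polynomial ℚ)) [I.IsMaximal]
    (hI : I = Ideal.span {Polynomial.X ^ 2 + 1}) :
    ¬ ∃ (m : Ideal (Localization.AtPrime I)) (_ : m.IsMaximal)
        (s : Localization.AtPrime I ⧸ m →+* Localization.AtPrime I),
      (Ideal.Quotient.mk m).comp s = RingHom.id (Localization.AtPrime I ⧸ m) := by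
  rintro ⟨m, hm, s, hs⟩
  set y : ℝ := liouvilleNumber 3 with hy
  have hty : Transcendental ℚ y := aux_transcendental_Q
  -- Step 1: m is the maximal ideal of the local ring.
  have hmeq : m = IsLocalRing.maximalIdeal (Localization.AtPrime I) :=
    IsLocalRing.eq_maximalIdeal hm
  -- Step 2: the class of X in the quotient squares to -1.
  have hX2 : (Polynomial.X ^ 2 + 1 : Polynomial ℚ) ∈ I := by
    rw [hI]; exact Ideal.subset_span rfl
  have hmem : algebraMap (Polynomial ℚ) (Localization.AtPrime I)
      (Polynomial.X ^ 2 + 1) ∈ m := by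
    rw [hmeq]
    exact (IsLocalization.AtPrime.to_map_mem_maximal_iff _ I _).mpr hX2
  set t : Localization.AtPrime I ⧸ m :=
    Ideal.Quotient.mk m (algebraMap (Polynomial ℚ) (Localization.AtPrime I) Polynomial.X)
    with ht0
  have ht : t ^ 2 = -1 := by
    have h0 : t ^ 2 + 1 = 0 := by
      have := Ideal.Quotient.eq_zero_iff_mem.mpr hmem
      simpa [ht0, map_add, map_pow, map_one] using this
    linear_combination h0
  -- Step 3: the section produces r ∈ R with r² = -1.
  have hr : (s t) ^ 2 = -1 := by
    rw [← RingHom.map_pow, ht]; exact (map_neg s 1).trans (by rw [map_one])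
  -- Step 4: build a ring hom from R to ℝ by evaluating at a transcendental number.
  have hunits : ∀ a : I.primeCompl,
      IsUnit ((Polynomial.aeval y : Polynomial ℚ →ₐ[ℚ] ℝ).toRingHom a) := by
    rintro ⟨a, ha⟩
    have hane : a ≠ 0 := fun h => ha (h ▸ I.zero_mem)
    have : Polynomial.aeval y a ≠ 0 := by
      intro h
      exact hty ⟨a, hane, h⟩
    simpa using this.isUnit
  let φ : Localization.AtPrime I →+* ℝ :=
    IsLocalization.lift (M := I.primeCompl) (S := Localization.AtPrime I) hunits
  have : (φ (s t)) ^ 2 = -1 := by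
    rw [← RingHom.map_pow, hr]; exact (map_neg φ 1).trans (by rw [map_one])
  nlinarith [sq_nonneg (φ (s t))]
end

section
/- Let R = ℚ[x]_{⟨x²+1⟩} be the localization of the polynomial ring ℚ[x] at its maximal ideal ⟨x²+1⟩. Then every subring K of R that is a field equals the image of the canonical ring homomorphism ℚ → R; in other words, ℚ is the unique maximal subfield of R. -/
open Polynomial

set_option maxHeartbeats 1000000

/-- Let `R = ℚ[x]_{⟨x²+1⟩}` be the localization of `ℚ[x]` at its
maximal ideal `⟨x² + 1⟩`. Then every subring `K` of `R` that is a field equals the image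
of the canonical ring homomorphism `ℚ → R`; in other words, `ℚ` is the unique maximal
subfield of `R`. -/
theorem stmt_16 (I : Ideal (Polynomial ℚ)) [I.IsMaximal]
    (hI : I = Ideal.span {Polynomial.X ^ 2 + 1}) :
    ∀ K : Subring (Localization.AtPrime I), IsField K →
      K = ((algebraMap (Polynomial ℚ) (Localization.AtPrime I)).comp
            (Polynomial.C : ℚ →+* Polynomial ℚ)).range := by
  intro K hK
  set R := Localization.AtPrime I with hR
  set f : ℚ[X] →+* R := algebraMap (Polynomial ℚ) R with hf
  have finj : Function.Injective f :=
    IsLocalization.injective R I.primeCompl_le_nonZeroDivisors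
  -- every rational constant lies in K
  have hrat : ∀ q : ℚ, f (C q) ∈ K := by
    intro q
    have hdenR : ((q.den : ℕ) : R) = f ((q.den : ℕ) : ℚ[X]) := (map_natCast f q.den).symm
    have hdenne : ((q.den : ℕ) : R) ≠ 0 := by
      rw [hdenR]
      intro h
      have : ((q.den : ℕ) : ℚ[X]) = 0 := finj (by simpa using h)
      exact_mod_cast (Nat.cast_ne_zero (R := ℚ[X])).mpr q.den_nz this
    have hdenK : ((q.den : ℕ) : K) ≠ 0 := by
      intro h
      apply hdenne
      have : (((q.den : ℕ) : K) : R) = ((q.den : ℕ) : R) := by push_cast; ring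
      rw [← this, h]; simp
    obtain ⟨y, hy⟩ := hK.mul_inv_cancel hdenK
    have hyR : ((q.den : ℕ) : R) * (y : R) = 1 := by exact_mod_cast congrArg Subtype.val hy
    have hmul : f (C q) * ((q.den : ℕ) : R) = ((q.num : ℤ) : R) := by
      rw [hdenR, ← map_intCast f, ← map_mul]
      congr 1
      rw [← C_eq_natCast, ← C_eq_intCast, ← map_mul]
      congr 1
      exact_mod_cast Rat.mul_den_eq_num q
    have : f (C q) = ((q.num : ℤ) : R) * (y : R) := by
      calc f (C q) = f (C q) * (((q.den : ℕ) : R) * (y : R)) := by rw [hyR, mul_one]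
        _ = (f (C q) * ((q.den : ℕ) : R)) * (y : R) := by ring
        _ = ((q.num : ℤ) : R) * (y : R) := by rw [hmul]
    rw [this]
    exact K.mul_mem (intCast_mem K q.num) y.2
  set m := IsLocalRing.maximalIdeal R with hm
  -- K ∩ m = 0
  have hmK : ∀ z : R, z ∈ K → z ∈ m → z = 0 := by
    intro z hzK hzm
    by_contra hz
    have hzK' : (⟨z, hzK⟩ : K) ≠ 0 := by
      intro h; exact hz (by simpa using congrArg Subtype.val h)
    obtain ⟨y, hy⟩ := hK.mul_inv_cancel hzK'
    have h1 : z * (y : R) = 1 := by simpa using congrArg Subtype.val hy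
    have hone : (1 : R) ∈ m := h1 ▸ m.mul_mem_right _ hzm
    exact (IsLocalRing.maximalIdeal.isMaximal R).ne_top ((Ideal.eq_top_iff_one _).mpr hone)
  have hImem : ∀ p ∈ I, f p ∈ m := by
    intro p hp
    have := Ideal.mem_map_of_mem f hp
    rwa [Localization.AtPrime.map_eq_maximalIdeal] at this
  have hX2 : (X ^ 2 + 1 : ℚ[X]) ∈ I := hI ▸ Ideal.subset_span rfl
  have hmonic : (X ^ 2 + 1 : ℚ[X]).Monic := by
    apply monic_X_pow_add
    rw [degree_one]
    decide
  -- every element of R is congruent to a + b X mod m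
  have hrep : ∀ k : R, ∃ a b : ℚ, k - f (C a + C b * X) ∈ m := by
    intro k
    obtain ⟨⟨p, s⟩, rfl⟩ := IsLocalization.mk'_surjective I.primeCompl k
    obtain ⟨t, i, hiI, hti⟩ := (inferInstance : I.IsMaximal).exists_inv s.2
    set r := (p * t) %ₘ (X ^ 2 + 1) with hrdef
    have hpt_r : p * t - r ∈ I := by
      have h := modByMonic_add_div (p * t) (X ^ 2 + 1)
      have : p * t - r = (X ^ 2 + 1) * ((p * t) /ₘ (X ^ 2 + 1)) := by
        linear_combination -h - hrdef
      rw [this]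
      exact I.mul_mem_right _ hX2
    -- mk' p s - f (p*t) ∈ m
    have hdiff : (IsLocalization.mk' R p s - f (p * t)) * f s = f (p * i) := by
      rw [sub_mul, IsLocalization.mk'_spec, ← map_mul, ← map_sub]
      congr 1
      have hi : i = 1 - t * (s : ℚ[X]) := by linear_combination hti
      rw [hi]; ring
    obtain ⟨u, hu⟩ := IsLocalization.map_units R s
    have hd1 : IsLocalization.mk' R p s - f (p * t) = f (p * i) * ↑u⁻¹ := by
      have hs : f (s : ℚ[X]) = ↑u := hu.symm
      rw [← hdiff, hs, mul_assoc, Units.mul_inv, mul_one]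
    have hmem1 : IsLocalization.mk' R p s - f (p * t) ∈ m := by
      rw [hd1]
      exact m.mul_mem_right _ (hImem _ (I.mul_mem_left p hiI))
    refine ⟨r.coeff 0, r.coeff 1, ?_⟩
    have hdeg2 : r.degree < 2 := by
      have := degree_modByMonic_lt (p * t) hmonic
      have hdX : (X ^ 2 + 1 : ℚ[X]).degree = 2 := by compute_degree!
      rwa [hdX] at this
    have hdeg : r.degree ≤ 1 := by
      rw [degree_le_iff_coeff_zero]
      intro n hn
      apply coeff_eq_zero_of_degree_lt
      refine lt_of_lt_of_le hdeg2 ?_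
      exact_mod_cast hn
    have hrform : r = C (r.coeff 0) + C (r.coeff 1) * X :=
      (eq_X_add_C_of_degree_le_one hdeg).trans (add_comm _ _)
    rw [← hrform]
    have : IsLocalization.mk' R p s - f r
        = (IsLocalization.mk' R p s - f (p * t)) + f (p * t - r) := by
      rw [map_sub]; ring
    rw [this]
    exact Ideal.add_mem _ hmem1 (hImem _ hpt_r)
  -- main argument
  ext k
  simp only [RingHom.mem_range, RingHom.comp_apply]
  constructor
  · intro hk
    obtain ⟨a, b, hab⟩ := hrep k
    set α := f (C a) with hα
    set β := f (C b) with hβ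
    set θ := f X with hθdef
    have hθ : θ ^ 2 + 1 ∈ m := by
      have := hImem _ hX2
      simpa using this
    have hk_eq : k - α = β * θ + (k - f (C a + C b * X)) := by
      rw [map_add, map_mul]; ring
    have he_mem_m : (k - α) ^ 2 + β ^ 2 ∈ m := by
      rw [hk_eq]
      have hexp : (β * θ + (k - f (C a + C b * X))) ^ 2 + β ^ 2
          = β ^ 2 * (θ ^ 2 + 1) + (2 * β * θ + (k - f (C a + C b * X)))
            * (k - f (C a + C b * X)) := by ring
      rw [hexp]
      exact Ideal.add_mem _ (m.mul_mem_left _ hθ) (m.mul_mem_left _ hab)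
    have he_K : (k - α) ^ 2 + β ^ 2 ∈ K :=
      K.add_mem (K.pow_mem (K.sub_mem hk (hrat a)) 2) (K.pow_mem (hrat b) 2)
    have he0 : (k - α) ^ 2 + β ^ 2 = 0 := hmK _ he_K he_mem_m
    by_cases hb : b = 0
    · have hβ0 : β = 0 := by rw [hβ, hb]; simp
      rw [hβ0] at he0
      have hsq : (k - α) ^ 2 = 0 := by linear_combination he0
      have : k - α = 0 := by
        have := pow_eq_zero_iff (n := 2) (by norm_num) |>.mp hsq
        exact this
      refine ⟨a, ?_⟩
      rw [hα] at this
      linear_combination -this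
    · exfalso
      obtain ⟨⟨u, v⟩, huv⟩ := IsLocalization.mk'_surjective I.primeCompl (k - α)
      have hspec : (k - α) * f v = f u := by
        have h0 := IsLocalization.mk'_spec R u v
        rw [show IsLocalization.mk' R u v = k - α from huv] at h0
        exact h0
      have key : f (u ^ 2 + (C b * v) ^ 2) = 0 := by
        rw [map_add, map_pow, map_pow, map_mul, ← hspec, ← hβ]
        linear_combination (f ↑v) ^ 2 * he0
      have hzero : u ^ 2 + (C b * (v : ℚ[X])) ^ 2 = 0 := by
        apply finj
        simpa using key
      have hv0 : (v : ℚ[X]) ≠ 0 := fun h => v.2 (h ▸ I.zero_mem)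
      have hbv : C b * (v : ℚ[X]) ≠ 0 :=
        mul_ne_zero (fun h => hb (by simpa using h)) hv0
      obtain ⟨c, hc⟩ := (C b * (v : ℚ[X])).exists_eval_ne_zero_of_natDegree_lt_card hbv
        ((Cardinal.nat_lt_aleph0 _).trans_le (Cardinal.aleph0_le_mk ℚ))
      have hev := congrArg (Polynomial.eval c) hzero
      simp only [eval_add, eval_pow, eval_mul, eval_zero] at hev
      have h1 : (eval c (C b * (v : ℚ[X]))) ^ 2 > 0 := by positivity
      simp only [eval_mul] at h1
      nlinarith [sq_nonneg (eval c u)]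
  · rintro ⟨q, rfl⟩
    exact hrat q
end

section
/- Let R be a commutative integral domain, m a maximal ideal of R, and K a subring of R that is a field, such that every element a ∈ R can be written as a = x + u with x ∈ m and u ∈ K. Then the localization R_m of R at m is a local ring with maximal ideal m·R_m in which every unit can be written as y + f(u) with y ∈ m·R_m and u ∈ K, where f : R → R_m is the localization map; that is, R_m belongs to class (A). -/
/-- Let `R` be a commutative integral domain, `m` a maximal ideal of
`R`, and `K` a subring of `R` that is a field, such that every `a ∈ R` can be written as
`a = x + u` with `x ∈ m` and `u ∈ K`. Then the localization `R_m` is a local ring whose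
maximal ideal is `m·R_m`, and every unit of `R_m` can be written as `y + f u` with
`y ∈ m·R_m` and `u ∈ K` (`f : R → R_m` the localization map); that is, `R_m` belongs to
class (A). -/
theorem stmt_19 {R : Type*} [CommRing R] [IsDomain R] (m : Ideal R) [m.IsMaximal]
    (K : Subring R) (hK : IsField K)
    (hdec : ∀ a : R, ∃ x ∈ m, ∃ u ∈ K, a = x + u) :
    let f : R →+* Localization.AtPrime m := algebraMap R (Localization.AtPrime m)
    IsLocalRing (Localization.AtPrime m) ∧
    Ideal.map f m = IsLocalRing.maximalIdeal (Localization.AtPrime m) ∧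
    ∀ z : Localization.AtPrime m, IsUnit z →
      ∃ y ∈ Ideal.map f m, ∃ u ∈ K, z = y + f u := by
  intro f
  refine ⟨inferInstance, Localization.AtPrime.map_eq_maximalIdeal, ?_⟩
  intro z _
  -- write z * f s = f a
  obtain ⟨⟨a, s⟩, hz⟩ := IsLocalization.surj m.primeCompl z
  obtain ⟨x, hx, u, hu, ha⟩ := hdec a
  obtain ⟨x', hx', u', hu', hs⟩ := hdec (s : R)
  have hsnm : (s : R) ∉ m := s.2
  have hu'ne : u' ≠ 0 := by
    rintro rfl
    exact hsnm (by rw [hs, add_zero]; exact hx')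
  -- inverse of u' inside K
  obtain ⟨w, hw⟩ := hK.mul_inv_cancel (a := (⟨u', hu'⟩ : K))
    (fun h => hu'ne (congrArg Subtype.val h))
  have hww : u' * (w : R) = 1 := by
    have := congrArg Subtype.val hw; simpa using this
  have h1 : a - u * (w : R) * (s : R) = x - u * w * x' := by
    rw [ha, hs]; linear_combination (-u) * hww
  refine ⟨z - f (u * w), ?_, u * w, K.mul_mem hu w.2, by ring⟩
  rw [Localization.AtPrime.map_eq_maximalIdeal]
  have hsu : IsUnit (f s) := IsLocalization.map_units _ s
  have key : (z - f (u * w)) * f s = f (x - u * w * x') := by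
    rw [sub_mul, hz, ← map_mul, ← map_sub, h1]
  have hmem : (z - f (u * w)) * f s ∈ Ideal.map f m := by
    rw [key]
    exact Ideal.mem_map_of_mem f (m.sub_mem hx (m.mul_mem_left _ hx'))
  rw [Localization.AtPrime.map_eq_maximalIdeal] at hmem
  obtain ⟨v, hv⟩ := hsu
  have := (IsLocalRing.maximalIdeal _).mul_mem_right (↑v⁻¹) hmem
  rwa [mul_assoc, ← hv, Units.mul_inv, mul_one] at this
end
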